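/- (Equilibrium energy identity, Section 5) Let c ∈ (0, π/2) and let d > 0 be the unique positive real with cosh(d) = 1 + cos(c). Define f⁺ = 1 + sin²(c)/sinh²(d) and f⁻ = 1 − sin²(c)/cosh²(d/2). Then f⁺ = (1 + 2cos c)/((2 + cos c)·cos c), f⁻ = (1 + 2cos c)·cos c/(2 + cos c), and 2·√(f⁺·f⁻) + f⁻ = 1 + 2cos c. -/

import Mathlib

/-- Equilibrium energy identity (Section 5): with cosh d = 1 + cos c, d > 0, the
quantities f⁺ = 1 + sin²c/sinh²d and f⁻ = 1 − sin²c/cosh²(d/2) take the stated values and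
satisfy 2√(f⁺f⁻) + f⁻ = 1 + 2cos c, i.e. the three-body configuration (±d, 0) at rest
attains the minimal energy. -/
theorem equilibrium_energy (c d : ℝ) (hc0 : 0 < c) (hc1 : c < Real.pi / 2) (hd : 0 < d)
    (hcosh : Real.cosh d = 1 + Real.cos c)
    (fp fm : ℝ)
    (hfp : fp = 1 + (Real.sin c) ^ 2 / (Real.sinh d) ^ 2)
    (hfm : fm = 1 - (Real.sin c) ^ 2 / (Real.cosh (d / 2)) ^ 2) :
    fp = (1 + 2 * Real.cos c) / ((2 + Real.cos c) * Real.cos c)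
    ∧ fm = (1 + 2 * Real.cos c) * Real.cos c / (2 + Real.cos c)
    ∧ 2 * Real.sqrt (fp * fm) + fm = 1 + 2 * Real.cos c := by
  set x := Real.cos c with hx
  have hx0 : 0 < x := Real.cos_pos_of_mem_Ioo ⟨by linarith [Real.pi_pos], hc1⟩
  -- sin^2 c = 1 - x^2
  have hsin : Real.sin c ^ 2 = 1 - x ^ 2 := by
    have := Real.sin_sq_add_cos_sq c
    nlinarith [this]
  -- sinh^2 d = x^2 + 2x
  have hsinh_sq : Real.sinh d ^ 2 = x ^ 2 + 2 * x := by
    have := Real.cosh_sq d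
    nlinarith [this]
  have hsinh_ne : Real.sinh d ^ 2 ≠ 0 := by
    rw [hsinh_sq]; nlinarith
  -- cosh(d/2)^2 = (2 + x)/2
  have hch : Real.cosh (d / 2) ^ 2 = (2 + x) / 2 := by
    have h2 := Real.cosh_two_mul (d / 2)
    have h0 : 2 * (d / 2) = d := by ring
    rw [h0] at h2
    have h3 := Real.cosh_sq (d / 2)
    nlinarith [h2, h3, hcosh]
  have hch_ne : Real.cosh (d / 2) ^ 2 ≠ 0 := by positivity
  have h2x : (0:ℝ) < 2 + x := by linarith
  have hfp' : fp = (1 + 2 * x) / ((2 + x) * x) := by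
    rw [hfp, hsin, hsinh_sq]
    field_simp
    ring
  have hfm' : fm = (1 + 2 * x) * x / (2 + x) := by
    rw [hfm, hsin, hch]
    field_simp
    ring
  refine ⟨hfp', hfm', ?_⟩
  have hprod : fp * fm = ((1 + 2 * x) / (2 + x)) ^ 2 := by
    rw [hfp', hfm']
    field_simp
  have hsqrt : Real.sqrt (fp * fm) = (1 + 2 * x) / (2 + x) := by
    rw [hprod, Real.sqrt_sq (by positivity)]
  rw [hsqrt, hfm']
  field_simp
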